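/- Let S be a real vector space, σ an antisymmetric ℝ-bilinear form on S, and μ a symmetric positive-definite ℝ-bilinear form on S satisfying (1/4)·σ(x,y)² ≤ μ(x,x)·μ(y,y) for all x, y ∈ S. Suppose (K, H) and (K', H') are two pairs, each consisting of a complex Hilbert space and an ℝ-linear map K : S → H (resp. K' : S → H') such that the ℂ-linear span of the image is dense and ⟨K x, K y⟩ = μ(x,y) + (i/2)σ(x,y) = ⟨K' x, K' y⟩ for all x, y ∈ S. Then there exists a surjective ℂ-linear isometry V : H → H' such that V(K x) = K' x for all x ∈ S. -/

import Mathlib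

noncomputable section

/-- Uniqueness of the one-particle structure (Kay–Wald): two one-particle structures
`(K, H)` and `(K', H')` for the same data `(S, σ, μ)` are related by a surjective `ℂ`-linear
isometry `V : H → H'` with `V ∘ K = K'`. -/
theorem oneParticleStructure_unique {S : Type*} [AddCommGroup S] [Module ℝ S]
    (σ μ : S →ₗ[ℝ] S →ₗ[ℝ] ℝ)
    (hσ : ∀ x y : S, σ x y = - σ y x)
    (hμsymm : ∀ x y : S, μ x y = μ y x)
    (hμpos : ∀ x : S, 0 ≤ μ x x)
    (hμdef : ∀ x : S, μ x x = 0 → x = 0)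
    (hineq : ∀ x y : S, (1 / 4) * (σ x y) ^ 2 ≤ μ x x * μ y y)
    {H : Type*} [NormedAddCommGroup H] [InnerProductSpace ℂ H] [CompleteSpace H]
    {H' : Type*} [NormedAddCommGroup H'] [InnerProductSpace ℂ H'] [CompleteSpace H']
    (K : S → H) (K' : S → H')
    (hKadd : ∀ x y : S, K (x + y) = K x + K y)
    (hKsmul : ∀ (r : ℝ) (x : S), K (r • x) = r • K x)
    (hKdense : Dense ((Submodule.span ℂ (Set.range K) : Submodule ℂ H) : Set H))
    (hKinner : ∀ x y : S,
      (inner ℂ (K x) (K y) : ℂ) = (μ x y : ℂ) + (Complex.I / 2) * (σ x y : ℂ))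
    (hK'add : ∀ x y : S, K' (x + y) = K' x + K' y)
    (hK'smul : ∀ (r : ℝ) (x : S), K' (r • x) = r • K' x)
    (hK'dense : Dense ((Submodule.span ℂ (Set.range K') : Submodule ℂ H') : Set H'))
    (hK'inner : ∀ x y : S,
      (inner ℂ (K' x) (K' y) : ℂ) = (μ x y : ℂ) + (Complex.I / 2) * (σ x y : ℂ)) :
    ∃ V : H →ₗᵢ[ℂ] H', Function.Surjective V ∧ ∀ x : S, V (K x) = K' x := by
  classical
  set P : S → H × H' := fun x => (K x, K' x) with hP
  set G : Submodule ℂ (H × H') := Submodule.span ℂ (Set.range P) with hG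
  -- inner products of first and second components agree on G
  have key : ∀ g ∈ G, ∀ h ∈ G, (inner ℂ g.1 h.1 : ℂ) = inner ℂ g.2 h.2 := by
    intro g hg h hh
    induction hg, hh using Submodule.span_induction₂ with
    | mem_mem a b ha hb =>
      obtain ⟨x, rfl⟩ := ha
      obtain ⟨y, rfl⟩ := hb
      simp only [hP]
      rw [hKinner, hK'inner]
    | zero_left b hb => simp
    | zero_right a ha => simp
    | add_left a b c ha hb hc h1 h2 =>
      simp only [Prod.fst_add, Prod.snd_add, inner_add_left, h1, h2]
    | add_right a b c ha hb hc h1 h2 =>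
      simp only [Prod.fst_add, Prod.snd_add, inner_add_right, h1, h2]
    | smul_left r a b ha hb h1 =>
      simp only [Prod.smul_fst, Prod.smul_snd, inner_smul_left, h1]
    | smul_right r a b ha hb h1 =>
      simp only [Prod.smul_fst, Prod.smul_snd, inner_smul_right, h1]
  have keynorm : ∀ g ∈ G, ‖g.1‖ = ‖g.2‖ := by
    intro g hg
    have h1 := key g hg g hg
    rw [inner_self_eq_norm_sq_to_K, inner_self_eq_norm_sq_to_K] at h1
    have h2 : (‖g.1‖ : ℝ) ^ 2 = ‖g.2‖ ^ 2 := by exact_mod_cast h1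
    nlinarith [norm_nonneg g.1, norm_nonneg g.2]
  set M : Submodule ℂ H := Submodule.span ℂ (Set.range K) with hM
  set L : G →ₗ[ℂ] H := (LinearMap.fst ℂ H H').comp G.subtype with hL
  have hLinj : Function.Injective L := by
    intro g h hgh
    have h0 : ((g : H × H') - (h : H × H')).1 = 0 := by
      simpa [sub_eq_zero, hL] using hgh
    have hmem : (g : H × H') - (h : H × H') ∈ G := sub_mem g.2 h.2
    have := keynorm _ hmem
    rw [h0] at this
    have h2 : ((g : H × H') - (h : H × H')).2 = 0 := by
      rw [← norm_eq_zero, ← this]; simp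
    have : (g : H × H') = (h : H × H') := by
      apply Prod.ext
      · simpa [sub_eq_zero] using h0
      · simpa [sub_eq_zero] using h2
    exact Subtype.ext this
  have hLrange : LinearMap.range L = M := by
    rw [hL, LinearMap.range_comp, Submodule.range_subtype, hG, Submodule.map_span, hM]
    congr 1
    rw [← Set.range_comp]
    rfl
  set e : G ≃ₗ[ℂ] M :=
    (LinearEquiv.ofInjective L hLinj).trans (LinearEquiv.ofEq _ _ hLrange) with he
  have he_apply : ∀ g : G, (e g : H) = (g : H × H').1 := fun g => rfl
  set f₀ : M →ₗ[ℂ] H' :=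
    (LinearMap.snd ℂ H H').comp (G.subtype.comp e.symm.toLinearMap) with hf₀
  have hf₀_apply : ∀ m : M, f₀ m = ((e.symm m : G) : H × H').2 := fun m => rfl
  have hsymm_fst : ∀ m : M, ((e.symm m : G) : H × H').1 = (m : H) := by
    intro m
    have := he_apply (e.symm m)
    rw [e.apply_symm_apply] at this
    exact this.symm
  have hf₀_norm : ∀ m : M, ‖f₀ m‖ = ‖m‖ := by
    intro m
    rw [hf₀_apply, ← keynorm _ (e.symm m).2, hsymm_fst]
    rfl
  set fIso : M →ₗᵢ[ℂ] H' := ⟨f₀, hf₀_norm⟩ with hfIso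
  have hιiso : Isometry ((↑) : M → H) := isometry_subtype_coe
  have hdense : DenseRange (M.subtypeL : M →L[ℂ] H) := by
    rw [DenseRange]
    convert hKdense
    ext x; simp [Submodule.subtypeL]
  set V₀ : H →L[ℂ] H' :=
    ContinuousLinearMap.extend fIso.toContinuousLinearMap (M.subtypeL) with hV₀
  have hV₀eq : ∀ m : M, V₀ (m : H) = f₀ m := by
    intro m
    exact ContinuousLinearMap.extend_eq _ hdense hιiso.isUniformInducing m
  have hV₀norm : ∀ h : H, ‖V₀ h‖ = ‖h‖ := by
    have : (fun h : H => ‖V₀ h‖) = fun h => ‖h‖ := by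
      apply Continuous.ext_on hKdense (by fun_prop) (by fun_prop)
      rintro x hx
      have : V₀ ((⟨x, hx⟩ : M) : H) = f₀ ⟨x, hx⟩ := hV₀eq ⟨x, hx⟩
      simp only [this, hf₀_norm]
      rfl
    exact fun h => congrFun this h
  set V : H →ₗᵢ[ℂ] H' := ⟨V₀.toLinearMap, hV₀norm⟩ with hV
  have hVK : ∀ x : S, V (K x) = K' x := by
    intro x
    have hmemM : K x ∈ M := Submodule.subset_span ⟨x, rfl⟩
    have hmemG : P x ∈ G := Submodule.subset_span ⟨x, rfl⟩
    have h1 : V (K x) = f₀ ⟨K x, hmemM⟩ := hV₀eq ⟨K x, hmemM⟩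
    have h2 : e ⟨P x, hmemG⟩ = ⟨K x, hmemM⟩ := Subtype.ext (he_apply _)
    have h3 : e.symm ⟨K x, hmemM⟩ = ⟨P x, hmemG⟩ := by
      rw [← h2, e.symm_apply_apply]
    rw [h1, hf₀_apply, h3]
  refine ⟨V, ?_, hVK⟩
  -- surjectivity
  have hclosed : IsClosed (Set.range V) := V.isometry.isClosedEmbedding.isClosed_range
  have hsub : (Submodule.span ℂ (Set.range K') : Set H') ⊆ Set.range V := by
    have : Set.range K' ⊆ (LinearMap.range V.toLinearMap : Set H') := by
      rintro _ ⟨x, rfl⟩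
      exact ⟨K x, hVK x⟩
    intro y hy
    have := (Submodule.span_le.mpr this) hy
    exact this
  intro y
  have : y ∈ closure (Submodule.span ℂ (Set.range K') : Set H') := by
    rw [hK'dense.closure_eq]; trivial
  have : y ∈ Set.range V := by
    have h := closure_mono hsub this
    rwa [hclosed.closure_eq] at h
  exact this
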